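/- Let φ = φ_1 ∧ … ∧ φ_k be a propositional formula in 3CNF over propositions x_1,…,x_n. Define the Boolean conjunctive query Q with head H() and body {Form(f,t,u)} ∪ {Clause_j(f,t,u) | 1 ≤ j ≤ k} ∪ {Clause_j(t,f,u) | 1 ≤ j ≤ k} ∪ ⋃_{i=1}^n {Neg_i(f,t,u), Neg_i(t,f,u)}, over variables f, t, u. Define the view V with head H(f,t,x_1,x̄_1,…,x_n,x̄_n) and body {Form(f,t,u)} ∪ {Clause_j(f,t,u) | 1 ≤ j ≤ k} ∪ ⋃_{i=1}^n ( {Neg_i(x_i,x̄_i,u), Neg_i(x̄_i,x_i,u)} ∪ {Clause_j(x_i,x̄_i,u) | the positive literal x_i occurs in clause φ_j} ∪ {Clause_j(x̄_i,x_i,u) | the negated literal ¬x_i occurs in clause φ_j} ). Then Q and V are hierarchical, and φ is satisfiable if and only if there exist an application α of V and a mapping ψ such that (body(Q), V, α, ψ) is a cover description for Q. -/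
import Mathlib


/-- A relational atom (or fact): a relation symbol with a list of arguments.
Arguments are natural numbers, serving both as variables and as data values. -/
structure Atom where
  rel : ℕ
  args : List ℕ
deriving DecidableEq

/-- Apply a substitution to an atom. -/
def mapAtom (f : ℕ → ℕ) (A : Atom) : Atom := ⟨A.rel, A.args.map f⟩

/-- The variables of an atom. -/
def Atom.vars (A : Atom) : Finset ℕ := A.args.toFinset

/-- The variables of a finite set of atoms. -/
def varsOf (B : Finset Atom) : Finset ℕ := B.biUnion Atom.vars

/-- A conjunctive query: a head atom and a finite set of body atoms. -/
structure CQ where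
  head : Atom
  body : Finset Atom
deriving DecidableEq

/-- All variables of a conjunctive query. -/
def CQ.vars (Q : CQ) : Finset ℕ := Q.head.vars ∪ varsOf Q.body

/-- A schema: a set of relation symbols together with an arity function. -/
structure Schema where
  rels : Set ℕ
  ar : ℕ → ℕ

/-- An atom (or fact) over a schema. -/
def atomOver (σ : Schema) (A : Atom) : Prop :=
  A.rel ∈ σ.rels ∧ A.args.length = σ.ar A.rel

/-- `Q` is a (well-formed) conjunctive query over schema `σ`:
nonempty body of σ-atoms, head relation symbol not in σ, and safety. -/
def isCQ (σ : Schema) (Q : CQ) : Prop :=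
  Q.body.Nonempty ∧ (∀ A ∈ Q.body, atomOver σ A) ∧
  Q.head.rel ∉ σ.rels ∧ Q.head.vars ⊆ varsOf Q.body

/-- A database is a set of facts (finiteness is imposed where needed). -/
abbrev Database := Set Atom

/-- A database over a schema. -/
def isDBOver (σ : Schema) (D : Database) : Prop := ∀ F ∈ D, atomOver σ F

/-- The result of a conjunctive query on a database. -/
def evalCQ (Q : CQ) (D : Database) : Set Atom :=
  { F | ∃ ν : ℕ → ℕ, (∀ A ∈ Q.body, mapAtom ν A ∈ D) ∧ mapAtom ν Q.head = F }

/-- Containment of conjunctive queries. -/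
def containedCQ (Q1 Q2 : CQ) : Prop :=
  ∀ D : Database, D.Finite → evalCQ Q1 D ⊆ evalCQ Q2 D

/-- Equivalence of conjunctive queries. -/
def equivCQ (Q1 Q2 : CQ) : Prop :=
  ∀ D : Database, D.Finite → evalCQ Q1 D = evalCQ Q2 D

/-- A conjunctive query is minimal if no equivalent CQ has strictly fewer body atoms. -/
def isMinimal (Q : CQ) : Prop :=
  ∀ Q2 : CQ, equivCQ Q Q2 → Q.body.card ≤ Q2.body.card

/-- A homomorphism from `Q2` to `Q1`. -/
def isHom (h : ℕ → ℕ) (Q2 Q1 : CQ) : Prop :=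
  (∀ A ∈ Q2.body, mapAtom h A ∈ Q1.body) ∧ mapAtom h Q2.head = Q1.head

/-- A body homomorphism from `Q2` to `Q1`. -/
def isBodyHom (h : ℕ → ℕ) (Q2 Q1 : CQ) : Prop :=
  ∀ A ∈ Q2.body, mapAtom h A ∈ Q1.body

/-- A set of views over σ: each view is a CQ over σ and views have
pairwise distinct head relation symbols. -/
def isViewSet (σ : Schema) (𝒱 : Finset CQ) : Prop :=
  (∀ V ∈ 𝒱, isCQ σ V) ∧
  ∀ V ∈ 𝒱, ∀ W ∈ 𝒱, V ≠ W → V.head.rel ≠ W.head.rel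

/-- The 𝒱-defined database 𝒱(D). -/
def viewDB (𝒱 : Finset CQ) (D : Database) : Database :=
  ⋃ V ∈ 𝒱, evalCQ V D

/-- `Q'` is a CQ over the schema σ_𝒱 of the head relations of the views 𝒱. -/
def overViews (𝒱 : Finset CQ) (Q' : CQ) : Prop :=
  Q'.body.Nonempty ∧
  (∀ A ∈ Q'.body, ∃ V ∈ 𝒱, A.rel = V.head.rel ∧ A.args.length = V.head.args.length) ∧
  (∀ V ∈ 𝒱, Q'.head.rel ≠ V.head.rel) ∧
  Q'.head.vars ⊆ varsOf Q'.body

/-- `Q'` is a 𝒱-rewriting of `Q`: `Q'` is over σ_𝒱 and `Q'(𝒱(D)) = Q(D)`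
for every (finite) database `D` over σ. -/
def isRewriting (σ : Schema) (𝒱 : Finset CQ) (Q Q' : CQ) : Prop :=
  overViews 𝒱 Q' ∧
  ∀ D : Database, D.Finite → isDBOver σ D →
    evalCQ Q' (viewDB 𝒱 D) = evalCQ Q D

/-- `T` is a join tree for the atom set `B`. -/
def joinTreeProp (B : Finset Atom) (T : SimpleGraph {A : Atom // A ∈ B}) : Prop :=
  T.IsTree ∧
  ∀ (x : ℕ) (A A' : {A : Atom // A ∈ B}) (p : T.Walk A A'), p.IsPath →
    x ∈ A.1.vars → x ∈ A'.1.vars → ∀ C ∈ p.support, x ∈ C.1.vars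

/-- The atom set `B` has a join tree. -/
def hasJoinTree (B : Finset Atom) : Prop :=
  ∃ T : SimpleGraph {A : Atom // A ∈ B}, joinTreeProp B T

/-- A conjunctive query is acyclic if its body has a join tree. -/
def isAcyclicCQ (Q : CQ) : Prop := hasJoinTree Q.body

/-- A conjunctive query is free-connex acyclic. -/
def isFreeConnex (Q : CQ) : Prop :=
  isAcyclicCQ Q ∧ hasJoinTree (insert Q.head Q.body)

/-- The bridge variables of `𝒜 ⊆ body(Q)`. -/
def bvars (Q : CQ) (𝒜 : Finset Atom) : Finset ℕ :=
  varsOf 𝒜 ∩ (Q.head.vars ∪ varsOf (Q.body \ 𝒜))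

/-- An application of a view `V`: a substitution that does not unify any
quantified variable of `V` with another variable of `V`. -/
def isApplication (V : CQ) (α : ℕ → ℕ) : Prop :=
  ∀ x ∈ varsOf V.body, x ∉ V.head.vars →
    ∀ y ∈ CQ.vars V, y ≠ x → α x ≠ α y

/-- The query α(V). -/
def applyCQ (α : ℕ → ℕ) (V : CQ) : CQ :=
  ⟨mapAtom α V.head, V.body.image (mapAtom α)⟩

/-- `(𝒜, V, α, ψ)` is a cover description for `Q`. -/
def isCoverDesc (Q : CQ) (𝒜 : Finset Atom) (V : CQ) (α ψ : ℕ → ℕ) : Prop :=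
  𝒜 ⊆ Q.body ∧ isApplication V α ∧
  𝒜 ⊆ V.body.image (mapAtom α) ∧
  bvars Q 𝒜 ⊆ V.head.vars.image α ∧
  isBodyHom ψ (applyCQ α V) Q ∧
  ∀ x ∈ varsOf 𝒜, ψ x = x

/-- A cover partition for `Q` over `𝒱`: a collection of cover descriptions
whose atom sets partition `body(Q)`. -/
def isCoverPartition (Q : CQ) (𝒱 : Finset CQ) (m : ℕ)
    (𝒜 : Fin m → Finset Atom) (V : Fin m → CQ) (α ψ : Fin m → ℕ → ℕ) : Prop :=
  (∀ i, V i ∈ 𝒱 ∧ isCoverDesc Q (𝒜 i) (V i) (α i) (ψ i)) ∧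
  ∀ A ∈ Q.body, ∃! i, A ∈ 𝒜 i

/-- Consistency of a cover partition: a variable of any `α_j(V_j)` lies in the
range of another `α_i` only if it also lies in `bvars(𝒜_j)`. -/
def isConsistent (Q : CQ) (m : ℕ) (𝒜 : Fin m → Finset Atom) (V : Fin m → CQ)
    (α : Fin m → ℕ → ℕ) : Prop :=
  ∀ i j : Fin m, i ≠ j → ∀ z ∈ CQ.vars (applyCQ (α j) (V j)),
    (∃ x ∈ CQ.vars (V i), α i x = z) → z ∈ bvars Q (𝒜 j)

/-- The query `Q_𝒞` induced by a (consistent) cover partition. -/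
def inducedCQ (Q : CQ) (m : ℕ) (V : Fin m → CQ) (α : Fin m → ℕ → ℕ) : CQ :=
  ⟨Q.head, Finset.image (fun i => mapAtom (α i) (V i).head) Finset.univ⟩

/-- Quantified variable disjointness for a family of view applications. -/
def QVD (m : ℕ) (V : Fin m → CQ) (α : Fin m → ℕ → ℕ) : Prop :=
  ∀ i j : Fin m, i ≠ j → ∀ x ∈ varsOf (V i).body, x ∉ (V i).head.vars →
    ∀ y ∈ CQ.vars (V j), α i x ≠ α j y

/-- `QE` is an expansion of `Q'` with respect to the views `𝒱`. -/
def isExpansion (𝒱 : Finset CQ) (Q' QE : CQ) : Prop :=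
  ∃ (m : ℕ) (A' : Fin m → Atom) (V : Fin m → CQ) (α : Fin m → ℕ → ℕ),
    (∀ i, V i ∈ 𝒱 ∧ isApplication (V i) (α i) ∧ A' i = mapAtom (α i) (V i).head) ∧
    Q'.body = Finset.image A' Finset.univ ∧
    QVD m V α ∧
    QE.head = Q'.head ∧
    QE.body = Finset.biUnion Finset.univ (fun i => (V i).body.image (mapAtom (α i)))

/-- `atoms(x)`: the body atoms of `Q` containing the variable `x`. -/
def atomsWith (Q : CQ) (x : ℕ) : Finset Atom :=
  Q.body.filter (fun A => x ∈ A.vars)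

/-- Hierarchical conjunctive queries. -/
def isHierarchical (Q : CQ) : Prop :=
  ∀ x y : ℕ, atomsWith Q x ⊆ atomsWith Q y ∨ atomsWith Q y ⊆ atomsWith Q x ∨
    atomsWith Q x ∩ atomsWith Q y = ∅

/-- q-hierarchical conjunctive queries. -/
def isQHierarchical (Q : CQ) : Prop :=
  isHierarchical Q ∧ ∀ x y : ℕ, atomsWith Q x ⊂ atomsWith Q y →
    x ∈ Q.head.vars → y ∈ Q.head.vars

/-- `P` is a partition of `body(Q)` witnessing weak head arity at most `k`. -/
def witnessesWHA (Q : CQ) (k n : ℕ) (P : Fin n → Finset Atom) : Prop :=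
  (∀ i, (P i).Nonempty) ∧ (∀ i, P i ⊆ Q.body) ∧ (∀ A ∈ Q.body, ∃! i, A ∈ P i) ∧
  (∀ i, (varsOf (P i) ∩ Q.head.vars).card ≤ k) ∧
  (∀ i j, i ≠ j → ∀ x ∈ varsOf (P i), x ∈ varsOf (P j) → x ∈ Q.head.vars)

/-- `Q` has weak head arity at most `k`. -/
def hasWHAle (Q : CQ) (k : ℕ) : Prop := ∃ n P, witnessesWHA Q k n P

/-- The weak head arity of `Q`. -/
noncomputable def weakHeadArity (Q : CQ) : ℕ := sInf {k | hasWHAle Q k}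

/-- The cover graph of `Q`: vertices are the body atoms, with an edge between
two atoms iff they share a variable not occurring in the head. -/
def coverGraph (Q : CQ) : SimpleGraph {A : Atom // A ∈ Q.body} :=
  SimpleGraph.fromRel (fun A B => ∃ x, x ∈ A.1.vars ∧ x ∈ B.1.vars ∧ x ∉ Q.head.vars)

/-- A subset `s` of the atom set `B` is connected in the (join) tree `T`. -/
def connectedIn (B : Finset Atom) (T : SimpleGraph {A : Atom // A ∈ B}) (s : Finset Atom) : Prop :=
  (T.induce {A : {A : Atom // A ∈ B} | A.1 ∈ s}).Connected

/-- The Boolean query `Q` derived from a 3CNF formula with `k` clauses and `n`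
propositions. Variables: `f = 0`, `t = 1`, `u = 2`. Relation symbols: `Form = 0`,
`Clause_j = 1 + j`, `Neg_i = 1 + k + i`; head symbol `1 + k + n`. -/
def satQuery (n k : ℕ) : CQ :=
  ⟨⟨1 + k + n, []⟩,
    {(⟨0, [0, 1, 2]⟩ : Atom)} ∪
    Finset.image (fun j : Fin k => (⟨1 + j.val, [0, 1, 2]⟩ : Atom)) Finset.univ ∪
    Finset.image (fun j : Fin k => (⟨1 + j.val, [1, 0, 2]⟩ : Atom)) Finset.univ ∪
    Finset.image (fun i : Fin n => (⟨1 + k + i.val, [0, 1, 2]⟩ : Atom)) Finset.univ ∪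
    Finset.image (fun i : Fin n => (⟨1 + k + i.val, [1, 0, 2]⟩ : Atom)) Finset.univ⟩

/-- The view `V` derived from a 3CNF formula `φ` with clauses `φ_j` (for `j : Fin k`)
each consisting of three literals `lit j p = (i, b)` (meaning `x_i` if `b = true` and
`¬x_i` if `b = false`). Variables: `f = 0`, `t = 1`, `u = 2`, `x_i = 3 + 2i`,
`x̄_i = 4 + 2i`. Head: `H(f, t, x_1, x̄_1, …, x_n, x̄_n)` with head symbol `2 + k + n`. -/
def satView (n k : ℕ) (lit : Fin k → Fin 3 → Fin n × Bool) : CQ :=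
  ⟨⟨2 + k + n, 0 :: 1 :: (List.range n).flatMap (fun i => [3 + 2 * i, 4 + 2 * i])⟩,
    {(⟨0, [0, 1, 2]⟩ : Atom)} ∪
    Finset.image (fun j : Fin k => (⟨1 + j.val, [0, 1, 2]⟩ : Atom)) Finset.univ ∪
    Finset.image (fun i : Fin n =>
      (⟨1 + k + i.val, [3 + 2 * i.val, 4 + 2 * i.val, 2]⟩ : Atom)) Finset.univ ∪
    Finset.image (fun i : Fin n =>
      (⟨1 + k + i.val, [4 + 2 * i.val, 3 + 2 * i.val, 2]⟩ : Atom)) Finset.univ ∪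
    Finset.image (fun ji : Fin k × Fin n =>
        (⟨1 + ji.1.val, [3 + 2 * ji.2.val, 4 + 2 * ji.2.val, 2]⟩ : Atom))
      (Finset.univ.filter (fun ji : Fin k × Fin n => ∃ p : Fin 3, lit ji.1 p = (ji.2, true))) ∪
    Finset.image (fun ji : Fin k × Fin n =>
        (⟨1 + ji.1.val, [4 + 2 * ji.2.val, 3 + 2 * ji.2.val, 2]⟩ : Atom))
      (Finset.univ.filter (fun ji : Fin k × Fin n => ∃ p : Fin 3, lit ji.1 p = (ji.2, false)))⟩

lemma mem_satQuery_body {n k : ℕ} {A : Atom} :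
    A ∈ (satQuery n k).body ↔
      A = ⟨0, [0,1,2]⟩ ∨ (∃ j : Fin k, A = ⟨1 + j.val, [0,1,2]⟩) ∨
      (∃ j : Fin k, A = ⟨1 + j.val, [1,0,2]⟩) ∨
      (∃ i : Fin n, A = ⟨1 + k + i.val, [0,1,2]⟩) ∨
      (∃ i : Fin n, A = ⟨1 + k + i.val, [1,0,2]⟩) := by
  simp [satQuery, Finset.mem_union, Finset.mem_image, eq_comm]

lemma mem_satView_body {n k : ℕ} {lit : Fin k → Fin 3 → Fin n × Bool} {A : Atom} :
    A ∈ (satView n k lit).body ↔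
      A = ⟨0, [0,1,2]⟩ ∨
      (∃ j : Fin k, A = ⟨1 + j.val, [0,1,2]⟩) ∨
      (∃ i : Fin n, A = ⟨1 + k + i.val, [3+2*i.val, 4+2*i.val, 2]⟩) ∨
      (∃ i : Fin n, A = ⟨1 + k + i.val, [4+2*i.val, 3+2*i.val, 2]⟩) ∨
      (∃ j : Fin k, ∃ i : Fin n, (∃ p : Fin 3, lit j p = (i, true)) ∧
        A = ⟨1 + j.val, [3+2*i.val, 4+2*i.val, 2]⟩) ∨
      (∃ j : Fin k, ∃ i : Fin n, (∃ p : Fin 3, lit j p = (i, false)) ∧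
        A = ⟨1 + j.val, [4+2*i.val, 3+2*i.val, 2]⟩) := by
  simp [satView, Finset.mem_union, Finset.mem_image, Finset.mem_filter, Prod.exists, eq_comm,
    and_comm]

lemma hier_aux (Q : CQ)
    (h2 : ∀ A ∈ Q.body, 2 ∈ A.vars)
    (hco : ∀ x y A B, x ≠ 2 → y ≠ 2 → A ∈ Q.body → B ∈ Q.body →
      x ∈ A.vars → y ∈ A.vars → x ∈ B.vars → y ∈ B.vars) :
    isHierarchical Q := by
  intro x y
  by_cases hxy : atomsWith Q x ∩ atomsWith Q y = ∅
  · exact Or.inr (Or.inr hxy)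
  · obtain ⟨A, hA⟩ := Finset.nonempty_iff_ne_empty.mpr hxy
    rw [Finset.mem_inter] at hA
    simp only [atomsWith, Finset.mem_filter] at hA
    obtain ⟨⟨hAQ, hxA⟩, ⟨-, hyA⟩⟩ := hA
    by_cases hx2 : x = 2
    · subst hx2
      refine Or.inr (Or.inl ?_)
      intro B hB
      simp only [atomsWith, Finset.mem_filter] at hB ⊢
      exact ⟨hB.1, h2 B hB.1⟩
    by_cases hy2 : y = 2
    · subst hy2
      refine Or.inl ?_
      intro B hB
      simp only [atomsWith, Finset.mem_filter] at hB ⊢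
      exact ⟨hB.1, h2 B hB.1⟩
    refine Or.inl ?_
    intro B hB
    simp only [atomsWith, Finset.mem_filter] at hB ⊢
    exact ⟨hB.1, hco x y A B hx2 hy2 hAQ hB.1 hxA hyA hB.2⟩

lemma query_args {n k : ℕ} {A : Atom} (h : A ∈ (satQuery n k).body) :
    A.args = [0,1,2] ∨ A.args = [1,0,2] := by
  rcases mem_satQuery_body.mp h with h | ⟨j, h⟩ | ⟨j, h⟩ | ⟨i, h⟩ | ⟨i, h⟩ <;>
    subst h <;> simp

lemma view_args {n k : ℕ} {lit : Fin k → Fin 3 → Fin n × Bool} {A : Atom}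
    (h : A ∈ (satView n k lit).body) :
    A.args = [0,1,2] ∨ ∃ i : Fin n,
      A.args = [3+2*i.val, 4+2*i.val, 2] ∨ A.args = [4+2*i.val, 3+2*i.val, 2] := by
  rcases mem_satView_body.mp h with h | ⟨j, h⟩ | ⟨i, h⟩ | ⟨i, h⟩ | ⟨j, i, -, h⟩ | ⟨j, i, -, h⟩ <;>
    subst h <;> simp <;> exact ⟨i, by omega⟩

lemma hier_query (n k : ℕ) : isHierarchical (satQuery n k) := by
  refine hier_aux _ (fun A hA => ?_) (fun x y A B hx2 hy2 hA hB hxA hyA hxB => ?_)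
  · rcases query_args hA with h | h <;> simp [Atom.vars, h]
  · rcases query_args hA with h | h <;> rcases query_args hB with h' | h' <;>
      simp [Atom.vars, h, h'] at hyA ⊢ <;> omega

lemma hier_view (n k : ℕ) (lit : Fin k → Fin 3 → Fin n × Bool) :
    isHierarchical (satView n k lit) := by
  refine hier_aux _ (fun A hA => ?_) (fun x y A B hx2 hy2 hA hB hxA hyA hxB => ?_)
  · rcases view_args hA with h | ⟨i, h | h⟩ <;> simp [Atom.vars, h]
  · rcases view_args hA with h | ⟨i, h | h⟩ <;> rcases view_args hB with h' | ⟨i', h' | h'⟩ <;>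
      simp [Atom.vars, h, h'] at hxA hyA hxB ⊢ <;> omega

def tauExt (n : ℕ) (τ : Fin n → Bool) (i : ℕ) : Bool :=
  if h : i < n then τ ⟨i, h⟩ else false

def satAlpha (n : ℕ) (τ : Fin n → Bool) (x : ℕ) : ℕ :=
  if x = 0 then 0 else if x = 1 then 1 else if x = 2 then 2 else
  if x % 2 = 1 then (if tauExt n τ ((x - 3) / 2) then 1 else 0)
  else (if tauExt n τ ((x - 4) / 2) then 0 else 1)

lemma satAlpha_3 {n : ℕ} (τ : Fin n → Bool) (i : Fin n) :
    satAlpha n τ (3 + 2 * i.val) = if τ i then 1 else 0 := by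
  have h : (3 + 2 * i.val - 3) / 2 = i.val := by omega
  unfold satAlpha
  rw [if_neg (by omega), if_neg (by omega), if_neg (by omega), if_pos (by omega), h]
  simp [tauExt]

lemma satAlpha_4 {n : ℕ} (τ : Fin n → Bool) (i : Fin n) :
    satAlpha n τ (4 + 2 * i.val) = if τ i then 0 else 1 := by
  have h : (4 + 2 * i.val - 4) / 2 = i.val := by omega
  unfold satAlpha
  rw [if_neg (by omega), if_neg (by omega), if_neg (by omega), if_neg (by omega), h]
  simp [tauExt]

lemma satAlpha_ne2 {n : ℕ} (τ : Fin n → Bool) {x : ℕ} (hx : x ≠ 2) :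
    satAlpha n τ x ≠ 2 := by
  unfold satAlpha; split_ifs <;> omega

lemma mem_view_head {n k : ℕ} {lit : Fin k → Fin 3 → Fin n × Bool} {x : ℕ} :
    x ∈ (satView n k lit).head.vars ↔
      x = 0 ∨ x = 1 ∨ ∃ i < n, x = 3 + 2 * i ∨ x = 4 + 2 * i := by
  simp [satView, Atom.vars, List.mem_flatMap]

lemma view_body_vars {n k : ℕ} {lit : Fin k → Fin 3 → Fin n × Bool} {x : ℕ}
    (h : x ∈ varsOf (satView n k lit).body) :
    x = 0 ∨ x = 1 ∨ x = 2 ∨ ∃ i < n, x = 3 + 2 * i ∨ x = 4 + 2 * i := by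
  simp only [varsOf, Finset.mem_biUnion] at h
  obtain ⟨A, hA, hx⟩ := h
  rcases view_args hA with h | ⟨i, h | h⟩
  · simp [Atom.vars, h] at hx; omega
  · simp [Atom.vars, h] at hx
    rcases hx with h' | h' | h'
    · exact Or.inr (Or.inr (Or.inr ⟨i, i.isLt, Or.inl h'⟩))
    · exact Or.inr (Or.inr (Or.inr ⟨i, i.isLt, Or.inr h'⟩))
    · omega
  · simp [Atom.vars, h] at hx
    rcases hx with h' | h' | h'
    · exact Or.inr (Or.inr (Or.inr ⟨i, i.isLt, Or.inr h'⟩))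
    · exact Or.inr (Or.inr (Or.inr ⟨i, i.isLt, Or.inl h'⟩))
    · omega

lemma bvars_query (n k : ℕ) : bvars (satQuery n k) (satQuery n k).body = ∅ := by
  simp [bvars, satQuery, Atom.vars, varsOf]

lemma forward_dir {n k : ℕ} {lit : Fin k → Fin 3 → Fin n × Bool} (τ : Fin n → Bool)
    (hτ : ∀ j : Fin k, ∃ p : Fin 3, τ (lit j p).1 = (lit j p).2) :
    isCoverDesc (satQuery n k) (satQuery n k).body (satView n k lit) (satAlpha n τ) id := by
  set α := satAlpha n τ with hα
  have hmap : ∀ (r a b c : ℕ), mapAtom α ⟨r, [a, b, c]⟩ = ⟨r, [α a, α b, α c]⟩ :=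
    fun _ _ _ _ => rfl
  have hα3 : ∀ i : Fin n, α (3 + 2 * i.val) = if τ i then 1 else 0 := satAlpha_3 τ
  have hα4 : ∀ i : Fin n, α (4 + 2 * i.val) = if τ i then 0 else 1 := satAlpha_4 τ
  have h0 : α 0 = 0 := rfl
  have h1 : α 1 = 1 := rfl
  have h2 : α 2 = 2 := rfl
  have himg : ∀ B ∈ (satView n k lit).body, mapAtom α B ∈ (satQuery n k).body := by
    intro B hB
    rcases mem_satView_body.mp hB with h | ⟨j, h⟩ | ⟨i, h⟩ | ⟨i, h⟩ | ⟨j, i, -, h⟩ | ⟨j, i, -, h⟩ <;>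
      subst h <;> rw [hmap] <;> refine mem_satQuery_body.mpr ?_
    · exact Or.inl (by rw [h0, h1, h2])
    · exact Or.inr (Or.inl ⟨j, by rw [h0, h1, h2]⟩)
    · by_cases ht : τ i
      · exact Or.inr (Or.inr (Or.inr (Or.inr ⟨i, by rw [hα3 i, hα4 i, h2, if_pos ht, if_pos ht]⟩)))
      · exact Or.inr (Or.inr (Or.inr (Or.inl ⟨i, by rw [hα3 i, hα4 i, h2, if_neg ht, if_neg ht]⟩)))
    · by_cases ht : τ i
      · exact Or.inr (Or.inr (Or.inr (Or.inl ⟨i, by rw [hα3 i, hα4 i, h2, if_pos ht, if_pos ht]⟩)))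
      · exact Or.inr (Or.inr (Or.inr (Or.inr ⟨i, by rw [hα3 i, hα4 i, h2, if_neg ht, if_neg ht]⟩)))
    · by_cases ht : τ i
      · exact Or.inr (Or.inr (Or.inl ⟨j, by rw [hα3 i, hα4 i, h2, if_pos ht, if_pos ht]⟩))
      · exact Or.inr (Or.inl ⟨j, by rw [hα3 i, hα4 i, h2, if_neg ht, if_neg ht]⟩)
    · by_cases ht : τ i
      · exact Or.inr (Or.inl ⟨j, by rw [hα3 i, hα4 i, h2, if_pos ht, if_pos ht]⟩)
      · exact Or.inr (Or.inr (Or.inl ⟨j, by rw [hα3 i, hα4 i, h2, if_neg ht, if_neg ht]⟩))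
  refine ⟨subset_refl _, ?_, ?_, ?_, ?_, fun x _ => rfl⟩
  · -- isApplication
    intro x hx hxh y _ hyx
    rcases view_body_vars hx with h | h | h | ⟨i, hi, h⟩
    · exact absurd (mem_view_head.mpr (Or.inl h)) hxh
    · exact absurd (mem_view_head.mpr (Or.inr (Or.inl h))) hxh
    · subst h
      rw [h2]
      exact fun he => satAlpha_ne2 τ hyx he.symm
    · exact absurd (mem_view_head.mpr (Or.inr (Or.inr ⟨i, hi, h⟩))) hxh
  · -- body of Q ⊆ α-image of body of V
    intro A hA
    rw [Finset.mem_image]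
    rcases mem_satQuery_body.mp hA with h | ⟨j, h⟩ | ⟨j, h⟩ | ⟨i, h⟩ | ⟨i, h⟩ <;> subst h
    · exact ⟨_, mem_satView_body.mpr (Or.inl rfl), by rw [hmap, h0, h1, h2]⟩
    · exact ⟨_, mem_satView_body.mpr (Or.inr (Or.inl ⟨j, rfl⟩)),
        by rw [hmap, h0, h1, h2]⟩
    · -- the interesting case: Clause_j(1,0,2)
      obtain ⟨p, hp⟩ := hτ j
      cases hb : (lit j p).2 with
      | false =>
        refine ⟨_, mem_satView_body.mpr (Or.inr (Or.inr (Or.inr (Or.inr (Or.inr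
          ⟨j, (lit j p).1, ⟨p, by rw [← hb]⟩, rfl⟩))))), ?_⟩
        rw [hb] at hp
        rw [hmap, hα3 _, hα4 _, h2, hp]
        simp
      | true =>
        refine ⟨_, mem_satView_body.mpr (Or.inr (Or.inr (Or.inr (Or.inr (Or.inl
          ⟨j, (lit j p).1, ⟨p, by rw [← hb]⟩, rfl⟩))))), ?_⟩
        rw [hb] at hp
        rw [hmap, hα3 _, hα4 _, h2, if_pos hp, if_pos hp]
    · by_cases ht : τ i
      · exact ⟨_, mem_satView_body.mpr (Or.inr (Or.inr (Or.inr (Or.inl ⟨i, rfl⟩)))),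
          by rw [hmap, hα3 i, hα4 i, h2, if_pos ht, if_pos ht]⟩
      · exact ⟨_, mem_satView_body.mpr (Or.inr (Or.inr (Or.inl ⟨i, rfl⟩))),
          by rw [hmap, hα3 i, hα4 i, h2, if_neg ht, if_neg ht]⟩
    · by_cases ht : τ i
      · exact ⟨_, mem_satView_body.mpr (Or.inr (Or.inr (Or.inl ⟨i, rfl⟩))),
          by rw [hmap, hα3 i, hα4 i, h2, if_pos ht, if_pos ht]⟩
      · exact ⟨_, mem_satView_body.mpr (Or.inr (Or.inr (Or.inr (Or.inl ⟨i, rfl⟩)))),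
          by rw [hmap, hα3 i, hα4 i, h2, if_neg ht, if_neg ht]⟩
  · rw [bvars_query]; exact Finset.empty_subset _
  · -- body hom
    intro A hA
    simp only [applyCQ, Finset.mem_image] at hA
    obtain ⟨B, hB, rfl⟩ := hA
    have : mapAtom id (mapAtom α B) = mapAtom α B := by
      simp [mapAtom]
    rw [this]
    exact himg B hB

lemma backward_dir {n k : ℕ} {lit : Fin k → Fin 3 → Fin n × Bool} {α ψ : ℕ → ℕ}
    (h : isCoverDesc (satQuery n k) (satQuery n k).body (satView n k lit) α ψ) :
    ∃ τ : Fin n → Bool, ∀ j : Fin k, ∃ p : Fin 3, τ (lit j p).1 = (lit j p).2 := by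
  obtain ⟨-, -, h3, -, -, -⟩ := h
  have hform : α 0 = 0 ∧ α 1 = 1 ∧ α 2 = 2 := by
    have hm : (⟨0, [0,1,2]⟩ : Atom) ∈ (satQuery n k).body := mem_satQuery_body.mpr (Or.inl rfl)
    obtain ⟨B, hB, hBeq⟩ := Finset.mem_image.mp (h3 hm)
    rcases mem_satView_body.mp hB with hc | ⟨j, hc⟩ | ⟨i, hc⟩ | ⟨i, hc⟩ |
        ⟨j, i, -, hc⟩ | ⟨j, i, -, hc⟩ <;>
      subst hc <;> simp [mapAtom, Atom.mk.injEq] at hBeq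
    exact hBeq
  refine ⟨fun i => decide (α (3 + 2 * i.val) = 1), fun j => ?_⟩
  have hm : (⟨1 + j.val, [1,0,2]⟩ : Atom) ∈ (satQuery n k).body :=
    mem_satQuery_body.mpr (Or.inr (Or.inr (Or.inl ⟨j, rfl⟩)))
  obtain ⟨B, hB, hBeq⟩ := Finset.mem_image.mp (h3 hm)
  rcases mem_satView_body.mp hB with hc | ⟨j', hc⟩ | ⟨i, hc⟩ | ⟨i, hc⟩ |
      ⟨j', i, ⟨p, hp⟩, hc⟩ | ⟨j', i, ⟨p, hp⟩, hc⟩ <;>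
    subst hc <;> simp only [mapAtom, Atom.mk.injEq, List.map_cons, List.map_nil,
      List.cons.injEq, and_true] at hBeq
  · omega
  · have := hform.1
    omega
  · have := j.isLt
    omega
  · have := j.isLt
    omega
  · have hj : j' = j := Fin.ext (by omega)
    subst hj
    refine ⟨p, ?_⟩
    rw [hp]
    simp [hBeq.2.1]
  · have hj : j' = j := Fin.ext (by omega)
    subst hj
    refine ⟨p, ?_⟩
    rw [hp]
    simp [hBeq.2.2.1]

/-- `Q` and `V` are hierarchical, and the 3CNF formula `φ` (given by its
literal table `lit`) is satisfiable iff there are an application `α` of `V` and a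
mapping `ψ` such that `(body(Q), V, α, ψ)` is a cover description for `Q`. -/
theorem statement18 (n k : ℕ) (lit : Fin k → Fin 3 → Fin n × Bool) :
    isHierarchical (satQuery n k) ∧ isHierarchical (satView n k lit) ∧
    ((∃ τ : Fin n → Bool, ∀ j : Fin k, ∃ p : Fin 3, τ (lit j p).1 = (lit j p).2) ↔
      ∃ α ψ : ℕ → ℕ, isCoverDesc (satQuery n k) (satQuery n k).body (satView n k lit) α ψ) := by
  refine ⟨hier_query n k, hier_view n k lit, ?_, ?_⟩
  · rintro ⟨τ, hτ⟩
    exact ⟨_, _, forward_dir τ hτ⟩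
  · rintro ⟨α, ψ, h⟩
    exact backward_dir h
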